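/- Let 0 < s₁ ≤ s₂ and 0 < α ≤ α₃ := ((1+s₂)log(1+1/s₂) − 1)/((1+s₁)log(1+1/s₁) − 1). Then I₂(q) ≥ I₁(q) for all q ∈ [0,1], where I₁, I₂ are the Poisson mutual information functions with gains α, 1 and dark currents s₁, s₂. -/

import Mathlib

open Real Set

noncomputable def mcF (s q : ℝ) : ℝ :=
  -((q + s) * Real.log (q + s)) + q * ((1 + s) * Real.log (1 + s) - s * Real.log s)
    + s * Real.log s

noncomputable def mcC (s : ℝ) : ℝ := (1 + s) * Real.log (1 + 1 / s) - 1

lemma mcC_eq {s : ℝ} (hs : 0 < s) :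
    mcC s = (1 + s) * Real.log (1 + s) - (1 + s) * Real.log s - 1 := by
  have h : (1 : ℝ) + 1 / s = (1 + s) / s := by field_simp; ring
  rw [mcC, h, Real.log_div (by positivity) (ne_of_gt hs)]
  ring

lemma mcC_pos {s : ℝ} (hs : 0 < s) : 0 < mcC s := by
  have h1s : (0:ℝ) < 1 + s := by linarith
  have h := Real.log_lt_sub_one_of_pos (x := s / (1 + s)) (by positivity)
    (by
      intro h
      rw [div_eq_one_iff_eq (ne_of_gt h1s)] at h
      linarith)
  have hlog : Real.log (s / (1 + s)) = Real.log s - Real.log (1 + s) :=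
    Real.log_div (ne_of_gt hs) (ne_of_gt h1s)
  rw [hlog] at h
  have hfrac : s / (1 + s) - 1 = -(1 / (1 + s)) := by field_simp; ring
  rw [hfrac] at h
  rw [mcC_eq hs]
  have h2 : 1 / (1 + s) < Real.log (1 + s) - Real.log s := by linarith
  have h3 : (1 + s) * (1 / (1 + s)) < (1 + s) * (Real.log (1 + s) - Real.log s) :=
    mul_lt_mul_of_pos_left h2 h1s
  rw [mul_one_div_cancel (ne_of_gt h1s)] at h3
  nlinarith

lemma mcC_anti {s₁ s₂ : ℝ} (h1 : 0 < s₁) (h12 : s₁ ≤ s₂) : mcC s₂ ≤ mcC s₁ := by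
  set c : ℝ → ℝ := fun x => (1 + x) * (Real.log (1 + x) - Real.log x) - 1 with hc
  have hderiv : ∀ x ∈ Icc s₁ s₂, 0 < x →
      HasDerivAt c (Real.log (1 + x) - Real.log x - 1 / x) x := by
    intro x _ hx
    have h1x : (0:ℝ) < 1 + x := by linarith
    have ha : HasDerivAt (fun x : ℝ => 1 + x) 1 x := by
      simpa using (hasDerivAt_id x).const_add 1
    have hl1 : HasDerivAt (fun x : ℝ => Real.log (1 + x)) ((1 + x)⁻¹) x := by
      exact ((Real.hasDerivAt_log (ne_of_gt h1x)).comp x ha).congr_deriv (by simp)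
    have hl2 : HasDerivAt Real.log x⁻¹ x := Real.hasDerivAt_log (ne_of_gt hx)
    have h := (ha.mul (hl1.sub hl2)).sub_const 1
    refine h.congr_deriv ?_; simp only [Pi.sub_apply]
    field_simp
    ring
  have hanti : AntitoneOn c (Icc s₁ s₂) := by
    apply antitoneOn_of_deriv_nonpos (convex_Icc s₁ s₂)
    · intro x hx
      exact ((hderiv x hx (lt_of_lt_of_le h1 hx.1)).continuousAt).continuousWithinAt
    · intro x hx
      rw [interior_Icc] at hx
      exact ((hderiv x (Ioo_subset_Icc_self hx) (lt_of_lt_of_le h1 (le_of_lt hx.1))).differentiableAt).differentiableWithinAt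
    · intro x hx
      rw [interior_Icc] at hx
      have hxpos : 0 < x := lt_of_lt_of_le h1 (le_of_lt hx.1)
      rw [(hderiv x (Ioo_subset_Icc_self hx) hxpos).deriv]
      have h1x : (0:ℝ) < 1 + x := by linarith
      have := Real.log_le_sub_one_of_pos (x := (1 + x) / x) (by positivity)
      rw [Real.log_div (ne_of_gt h1x) (ne_of_gt hxpos)] at this
      have : Real.log (1 + x) - Real.log x ≤ (1 + x) / x - 1 := this
      have hfr : (1 + x) / x - 1 = 1 / x := by field_simp; ring
      rw [hfr] at this
      linarith
  have e1 : mcC s₁ = c s₁ := mcC_eq h1 |>.trans (by simp [hc]; ring)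
  have e2 : mcC s₂ = c s₂ := mcC_eq (lt_of_lt_of_le h1 h12) |>.trans (by simp [hc]; ring)
  rw [e1, e2]
  exact hanti (left_mem_Icc.2 h12) (right_mem_Icc.2 h12) h12

lemma mcF_zero {s : ℝ} : mcF s 0 = 0 := by simp [mcF]

lemma mcF_one {s : ℝ} : mcF s 1 = 0 := by simp [mcF]; ring

lemma mcF_nonneg {s : ℝ} (hs : 0 < s) {q : ℝ} (hq : q ∈ Icc (0:ℝ) 1) : 0 ≤ mcF s q := by
  obtain ⟨hq0, hq1⟩ := hq
  have hconv := Real.convexOn_mul_log.2 (mem_Ici.2 (le_of_lt hs))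
    (mem_Ici.2 (by linarith : (0:ℝ) ≤ 1 + s))
    (by linarith : (0:ℝ) ≤ 1 - q) hq0 (by ring : (1 - q) + q = 1)
  simp only [smul_eq_mul] at hconv
  have hpt : (1 - q) * s + q * (1 + s) = q + s := by ring
  rw [hpt] at hconv
  unfold mcF
  nlinarith [hconv]

lemma mcF_hasDeriv {s q : ℝ} (hqs : 0 < q + s) :
    HasDerivAt (mcF s)
      (-Real.log (q + s) + ((1 + s) * Real.log (1 + s) - s * Real.log s - 1)) q := by
  have hA : HasDerivAt (fun q : ℝ => (q + s) * Real.log (q + s)) (Real.log (q + s) + 1) q := by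
    refine ((Real.hasDerivAt_mul_log (ne_of_gt hqs)).comp q ((hasDerivAt_id q).add_const s)).congr_deriv ?_; simp
  have hB : HasDerivAt (fun q : ℝ => q * ((1 + s) * Real.log (1 + s) - s * Real.log s))
      ((1 + s) * Real.log (1 + s) - s * Real.log s) q := by
    simpa using (hasDerivAt_id q).mul_const ((1 + s) * Real.log (1 + s) - s * Real.log s)
  have h := (hA.neg.add hB).add_const (s * Real.log s)
  refine h.congr_deriv ?_
  ring

lemma mc_log_shift_hasDeriv {s q : ℝ} (hqs : 0 < q + s) :
    HasDerivAt (fun q : ℝ => Real.log (q + s)) ((q + s)⁻¹) q := by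
  refine ((Real.hasDerivAt_log (ne_of_gt hqs)).comp q ((hasDerivAt_id q).add_const s)).congr_deriv ?_; simp

/-- If `g a = 0`, `g' a = 0` and `g'' ≥ 0` on `[a,b]`, then `g ≥ 0` on `[a,b]`. -/
lemma mc_pos_part {g g1 g2 : ℝ → ℝ} {a b : ℝ} (hab : a ≤ b)
    (hg : ∀ x ∈ Icc a b, HasDerivAt g (g1 x) x)
    (hg1 : ∀ x ∈ Icc a b, HasDerivAt g1 (g2 x) x)
    (h2 : ∀ x ∈ Icc a b, 0 ≤ g2 x)
    (ha : g a = 0) (ha1 : g1 a = 0) :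
    ∀ x ∈ Icc a b, 0 ≤ g x := by
  have hmono1 : MonotoneOn g1 (Icc a b) := by
    apply monotoneOn_of_deriv_nonneg (convex_Icc a b)
    · exact fun x hx => ((hg1 x hx).continuousAt).continuousWithinAt
    · intro x hx
      rw [interior_Icc] at hx
      exact ((hg1 x (Ioo_subset_Icc_self hx)).differentiableAt).differentiableWithinAt
    · intro x hx
      rw [interior_Icc] at hx
      rw [(hg1 x (Ioo_subset_Icc_self hx)).deriv]
      exact h2 x (Ioo_subset_Icc_self hx)
  have h1nn : ∀ x ∈ Icc a b, 0 ≤ g1 x := by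
    intro x hx
    have := hmono1 (left_mem_Icc.2 hab) hx hx.1
    rwa [ha1] at this
  have hmono : MonotoneOn g (Icc a b) := by
    apply monotoneOn_of_deriv_nonneg (convex_Icc a b)
    · exact fun x hx => ((hg x hx).continuousAt).continuousWithinAt
    · intro x hx
      rw [interior_Icc] at hx
      exact ((hg x (Ioo_subset_Icc_self hx)).differentiableAt).differentiableWithinAt
    · intro x hx
      rw [interior_Icc] at hx
      rw [(hg x (Ioo_subset_Icc_self hx)).deriv]
      exact h1nn x (Ioo_subset_Icc_self hx)
  intro x hx
  have := hmono (left_mem_Icc.2 hab) hx hx.1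
  rwa [ha] at this

/-- If `g` is concave on `[a,b]` with nonnegative endpoints, it is nonnegative. -/
lemma mc_concave_part {g : ℝ → ℝ} {a b : ℝ} (hab : a ≤ b)
    (hc : ConcaveOn ℝ (Icc a b) g) (ha : 0 ≤ g a) (hb : 0 ≤ g b) :
    ∀ x ∈ Icc a b, 0 ≤ g x := by
  intro x hx
  rcases eq_or_lt_of_le hab with rfl | hlt
  · have : x = a := le_antisymm hx.2 hx.1
    rwa [this]
  · have hba : 0 < b - a := by linarith
    set lam := (b - x) / (b - a) with hlam
    set mu := (x - a) / (b - a) with hmu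
    have hlam0 : 0 ≤ lam := by apply div_nonneg <;> linarith [hx.2]
    have hmu0 : 0 ≤ mu := by apply div_nonneg <;> linarith [hx.1]
    have hne : b - a ≠ 0 := ne_of_gt hba
    have hsum : lam + mu = 1 := by
      rw [hlam, hmu, ← add_div, show b - x + (x - a) = b - a by ring, div_self hne]
    have hcomb : lam * a + mu * b = x := by
      rw [hlam, hmu]
      field_simp
      ring
    have := hc.2 (left_mem_Icc.2 hab) (right_mem_Icc.2 hab) hlam0 hmu0 hsum
    simp only [smul_eq_mul] at this
    rw [hcomb] at this
    nlinarith

lemma mc_key {s₁ s₂ : ℝ} (h1 : 0 < s₁) (h12 : s₁ ≤ s₂) :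
    ∀ q ∈ Icc (0:ℝ) 1, mcC s₂ * mcF s₁ q ≤ mcC s₁ * mcF s₂ q := by
  have h2 : 0 < s₂ := lt_of_lt_of_le h1 h12
  set g : ℝ → ℝ := fun q => mcC s₁ * mcF s₂ q - mcC s₂ * mcF s₁ q with hgdef
  set g1 : ℝ → ℝ := fun q =>
    mcC s₁ * (-Real.log (q + s₂) + ((1 + s₂) * Real.log (1 + s₂) - s₂ * Real.log s₂ - 1))
      - mcC s₂ * (-Real.log (q + s₁) + ((1 + s₁) * Real.log (1 + s₁) - s₁ * Real.log s₁ - 1))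
    with hg1def
  set g2 : ℝ → ℝ := fun q => mcC s₂ * (q + s₁)⁻¹ - mcC s₁ * (q + s₂)⁻¹ with hg2def
  have hqspos : ∀ {q : ℝ} {s : ℝ}, 0 < s → 0 ≤ q → 0 < q + s := fun hs hq => by linarith
  have hg : ∀ x ∈ Icc (0:ℝ) 1, HasDerivAt g (g1 x) x := by
    intro x hx
    exact ((mcF_hasDeriv (hqspos h2 hx.1)).const_mul (mcC s₁)).sub
      ((mcF_hasDeriv (hqspos h1 hx.1)).const_mul (mcC s₂))
  have hg1 : ∀ x ∈ Icc (0:ℝ) 1, HasDerivAt g1 (g2 x) x := by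
    intro x hx
    have hA := ((mc_log_shift_hasDeriv (hqspos h2 hx.1)).neg.add_const
      ((1 + s₂) * Real.log (1 + s₂) - s₂ * Real.log s₂ - 1)).const_mul (mcC s₁)
    have hB := ((mc_log_shift_hasDeriv (hqspos h1 hx.1)).neg.add_const
      ((1 + s₁) * Real.log (1 + s₁) - s₁ * Real.log s₁ - 1)).const_mul (mcC s₂)
    have h := hA.sub hB
    refine h.congr_deriv ?_
    ring
  have hg0 : g 0 = 0 := by
    simp only [hgdef]; rw [mcF_zero, mcF_zero]; ring
  have hgone : g 1 = 0 := by
    simp only [hgdef]; rw [mcF_one, mcF_one]; ring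
  have hg10 : g1 0 = 0 := by
    have e1 := mcC_eq h1
    have e2 := mcC_eq h2
    have hx1 : -Real.log s₁ + ((1 + s₁) * Real.log (1 + s₁) - s₁ * Real.log s₁ - 1) = mcC s₁ := by
      rw [e1]; ring
    have hx2 : -Real.log s₂ + ((1 + s₂) * Real.log (1 + s₂) - s₂ * Real.log s₂ - 1) = mcC s₂ := by
      rw [e2]; ring
    simp only [hg1def, zero_add, hx1, hx2]
    ring
  -- sign of g2 controlled by ψ q = mcC s₂ * (q + s₂) - mcC s₁ * (q + s₁)
  have hg2eq : ∀ q : ℝ, 0 ≤ q →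
      g2 q = (mcC s₂ * (q + s₂) - mcC s₁ * (q + s₁)) / ((q + s₁) * (q + s₂)) := by
    intro q hq
    have p1 := hqspos h1 hq
    have p2 := hqspos h2 hq
    simp only [hg2def]; field_simp
  set D := mcC s₁ - mcC s₂ with hD
  have hD0 : 0 ≤ D := sub_nonneg.2 (mcC_anti h1 h12)
  set E := mcC s₂ * s₂ - mcC s₁ * s₁ with hE
  have hpsi : ∀ q : ℝ, mcC s₂ * (q + s₂) - mcC s₁ * (q + s₁) = E - D * q := by
    intro q; simp only [hE, hD]; ring
  -- three cases
  intro q hq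
  have goal_of : 0 ≤ g q → mcC s₂ * mcF s₁ q ≤ mcC s₁ * mcF s₂ q := by
    intro h; simp only [hgdef] at h; linarith
  apply goal_of
  rcases le_or_gt D E with hcA | hcA
  · -- ψ ≥ 0 on [0,1] : convex case
    refine mc_pos_part (le_of_lt one_pos) hg hg1 ?_ hg0 hg10 q hq
    intro x hx
    rw [hg2eq x hx.1, hpsi]
    apply div_nonneg
    · nlinarith [hx.2]
    · have := hqspos h1 hx.1; have := hqspos h2 hx.1; positivity
  · rcases le_or_gt E 0 with hcB | hcB
    · -- ψ ≤ 0 on [0,1] : concave case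
      have hconc : ConcaveOn ℝ (Icc (0:ℝ) 1) g := by
        apply concaveOn_of_hasDerivWithinAt2_nonpos (convex_Icc 0 1) (f' := g1) (f'' := g2)
        · exact fun x hx => ((hg x hx).continuousAt).continuousWithinAt
        · intro x hx
          rw [interior_Icc] at hx
          exact ((hg x (Ioo_subset_Icc_self hx)).hasDerivWithinAt)
        · intro x hx
          rw [interior_Icc] at hx
          exact ((hg1 x (Ioo_subset_Icc_self hx)).hasDerivWithinAt)
        · intro x hx
          rw [interior_Icc] at hx
          rw [hg2eq x (le_of_lt hx.1), hpsi]
          apply div_nonpos_of_nonpos_of_nonneg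
          · nlinarith [hx.1, hD0, hcB]
          · have := hqspos h1 (le_of_lt hx.1); have := hqspos h2 (le_of_lt hx.1); positivity
      exact mc_concave_part (le_of_lt one_pos) hconc (le_of_eq hg0.symm) (le_of_eq hgone.symm)
        q hq
    · -- mixed case : convex on [0, t], concave on [t, 1] with t = E / D
      have hDpos : 0 < D := lt_trans hcB hcA
      set t := E / D with ht
      have ht0 : 0 < t := div_pos hcB hDpos
      have ht1 : t < 1 := (div_lt_one hDpos).2 hcA
      have htE : D * t = E := by rw [ht]; field_simp
      have hposleft : ∀ x ∈ Icc (0:ℝ) t, 0 ≤ g x := by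
        refine mc_pos_part (le_of_lt ht0) (fun x hx => hg x ⟨hx.1, le_trans hx.2 (le_of_lt ht1)⟩)
          (fun x hx => hg1 x ⟨hx.1, le_trans hx.2 (le_of_lt ht1)⟩) ?_ hg0 hg10
        intro x hx
        rw [hg2eq x hx.1, hpsi]
        apply div_nonneg
        · nlinarith [hx.2, htE, hDpos.le]
        · have := hqspos h1 hx.1; have := hqspos h2 hx.1; positivity
      have hconc : ConcaveOn ℝ (Icc t 1) g := by
        apply concaveOn_of_hasDerivWithinAt2_nonpos (convex_Icc t 1) (f' := g1) (f'' := g2)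
        · intro x hx
          exact ((hg x ⟨le_trans (le_of_lt ht0) hx.1, hx.2⟩).continuousAt).continuousWithinAt
        · intro x hx
          rw [interior_Icc] at hx
          exact (hg x ⟨le_trans (le_of_lt ht0) (le_of_lt hx.1), le_of_lt hx.2⟩).hasDerivWithinAt
        · intro x hx
          rw [interior_Icc] at hx
          exact (hg1 x ⟨le_trans (le_of_lt ht0) (le_of_lt hx.1), le_of_lt hx.2⟩).hasDerivWithinAt
        · intro x hx
          rw [interior_Icc] at hx
          have hx0 : (0:ℝ) ≤ x := le_trans (le_of_lt ht0) (le_of_lt hx.1)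
          rw [hg2eq x hx0, hpsi]
          apply div_nonpos_of_nonpos_of_nonneg
          · nlinarith [hx.1, htE, hDpos]
          · have := hqspos h1 hx0; have := hqspos h2 hx0; positivity
      rcases le_or_gt q t with hqt | hqt
      · exact hposleft q ⟨hq.1, hqt⟩
      · exact mc_concave_part (le_of_lt ht1)
          hconc (hposleft t ⟨le_of_lt ht0, le_refl t⟩) (le_of_eq hgone.symm) q ⟨le_of_lt hqt, hq.2⟩

theorem more_capable' (s₁ s₂ α : ℝ) (h1 : 0 < s₁) (h12 : s₁ ≤ s₂) (hα0 : 0 < α)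
    (hα : α ≤ ((1 + s₂) * Real.log (1 + 1 / s₂) - 1) / ((1 + s₁) * Real.log (1 + 1 / s₁) - 1)) :
    ∀ q ∈ Icc (0:ℝ) 1,
      α * (-(q + s₁) * Real.log (q + s₁) + q * (1 + s₁) * Real.log (1 + s₁)
        + (1 - q) * s₁ * Real.log s₁) ≤
      (-(q + s₂) * Real.log (q + s₂) + q * (1 + s₂) * Real.log (1 + s₂)
        + (1 - q) * s₂ * Real.log s₂) := by
  intro q hq
  have h2 : 0 < s₂ := lt_of_lt_of_le h1 h12
  have hF1 : (-(q + s₁) * Real.log (q + s₁) + q * (1 + s₁) * Real.log (1 + s₁)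
      + (1 - q) * s₁ * Real.log s₁) = mcF s₁ q := by unfold mcF; ring
  have hF2 : (-(q + s₂) * Real.log (q + s₂) + q * (1 + s₂) * Real.log (1 + s₂)
      + (1 - q) * s₂ * Real.log s₂) = mcF s₂ q := by unfold mcF; ring
  rw [hF1, hF2]
  have hαC : α ≤ mcC s₂ / mcC s₁ := hα
  have hC1 := mcC_pos h1
  have hF1nn := mcF_nonneg h1 hq
  have hkey := mc_key h1 h12 q hq
  calc α * mcF s₁ q ≤ (mcC s₂ / mcC s₁) * mcF s₁ q :=
        mul_le_mul_of_nonneg_right hαC hF1nn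
    _ ≤ mcF s₂ q := by
        rw [div_mul_eq_mul_div, div_le_iff₀ hC1]
        linarith [hkey]
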